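/- arXiv:2410.01537 — 2 statements merged into one kernel-verified Lean document; each statement's English description precedes it below -/
import Mathlib

section
/- Let γ > 0 and ε ≥ 0 be fixed. Let (d_n), (L_n) be sequences of positive integers and (λ_n) a sequence of positive reals such that d_n → ∞, L_n / d_n → 0, λ_n·√(d_n) → ∞, and λ_n·√(L_n) → 0 as n → ∞. Then γ² − 2γ²·erf( λ_n·√( d_n / (2(1 + 2λ_n²γ²)) ) ) + γ²·ζ(λ_n·√(d_n/2), λ_n²γ²) + (L_n − 1)·ζ(0, λ_n²) + ε² converges to ε² as n → ∞. (Asymptotic Bayes optimality of the oracle attention predictor: its risk tends to the noise level ε².) -/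
open MeasureTheory ProbabilityTheory Real Filter

noncomputable def erf (u : ℝ) : ℝ := 2 / Real.sqrt Real.pi * ∫ r in (0:ℝ)..u, Real.exp (-r ^ 2)

noncomputable def zeta (t s : ℝ) : ℝ := ∫ g, erf (t + g) ^ 2 ∂(gaussianReal 0 s.toNNReal)

lemma exp_neg_sq_integrable : Integrable (fun r : ℝ => Real.exp (-r ^ 2)) := by
  simpa using integrable_exp_neg_mul_sq (one_pos)

lemma erf_continuous : Continuous erf := by
  unfold erf
  exact continuous_const.mul (intervalIntegral.continuous_primitive
    (fun a b => (Continuous.intervalIntegrable (by continuity) a b)) 0)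

lemma abs_erf_le_two (u : ℝ) : |erf u| ≤ 2 := by
  have hpi : 0 < Real.sqrt Real.pi := Real.sqrt_pos.mpr Real.pi_pos
  have h1 : ‖∫ r in (0:ℝ)..u, Real.exp (-r ^ 2)‖ ≤ Real.sqrt Real.pi := by
    refine le_trans intervalIntegral.norm_integral_le_integral_norm_uIoc ?_
    have heq : ∀ r : ℝ, ‖Real.exp (-r ^ 2)‖ = Real.exp (-r ^ 2) := fun r =>
      Real.norm_eq_abs _ ▸ abs_of_pos (Real.exp_pos _)
    simp only [heq]
    calc ∫ r in Set.uIoc 0 u, Real.exp (-r ^ 2)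
        ≤ ∫ r, Real.exp (-r ^ 2) :=
          setIntegral_le_integral exp_neg_sq_integrable (ae_of_all _ fun x => (Real.exp_pos _).le)
      _ = Real.sqrt Real.pi := by simpa using integral_gaussian 1
  calc |erf u| = 2 / Real.sqrt Real.pi * |∫ r in (0:ℝ)..u, Real.exp (-r ^ 2)| := by
        rw [erf, abs_mul, abs_of_pos (by positivity)]
    _ ≤ 2 / Real.sqrt Real.pi * Real.sqrt Real.pi := by
        exact mul_le_mul_of_nonneg_left ((Real.norm_eq_abs _).symm.trans_le h1) (by positivity)
    _ = 2 := by field_simp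

lemma abs_erf_le_linear (u : ℝ) : |erf u| ≤ 2 / Real.sqrt Real.pi * |u| := by
  have h1 : ‖∫ r in (0:ℝ)..u, Real.exp (-r ^ 2)‖ ≤ 1 * |u - 0| :=
    intervalIntegral.norm_integral_le_of_norm_le_const (fun x _ => by
      rw [Real.norm_eq_abs, abs_of_pos (Real.exp_pos _)]
      exact Real.exp_le_one_iff.mpr (neg_nonpos.mpr (sq_nonneg x)))
  rw [erf, abs_mul, abs_of_pos (by positivity : (0:ℝ) < 2 / Real.sqrt Real.pi)]
  refine mul_le_mul_of_nonneg_left ?_ (by positivity)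
  simpa using h1

lemma erf_tendsto_one : Tendsto erf atTop (nhds 1) := by
  have h := MeasureTheory.intervalIntegral_tendsto_integral_Ioi 0
    exp_neg_sq_integrable.integrableOn (tendsto_id (α := ℝ))
  have h2 : ∫ r in Set.Ioi (0:ℝ), Real.exp (-r ^ 2) = Real.sqrt Real.pi / 2 := by
    simpa using integral_gaussian_Ioi 1
  rw [h2] at h
  have h3 := h.const_mul (2 / Real.sqrt Real.pi)
  have hval : 2 / Real.sqrt Real.pi * (Real.sqrt Real.pi / 2) = 1 := by
    have hpi : Real.sqrt Real.pi ≠ 0 := ne_of_gt (Real.sqrt_pos.mpr Real.pi_pos)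
    field_simp
  rw [hval] at h3
  exact h3

lemma gaussian_scale (s : ℝ) (hs : 0 ≤ s) :
    (gaussianReal 0 1).map (fun z => Real.sqrt s * z) = gaussianReal 0 s.toNNReal := by
  have h := gaussianReal_map_const_mul (μ := 0) (v := 1) (Real.sqrt s)
  rw [show ((Real.sqrt s * ·) : ℝ → ℝ) = fun z => Real.sqrt s * z from rfl] at h
  rw [h]
  congr 1
  · simp
  · ext
    simp [Real.sq_sqrt hs, Real.coe_toNNReal _ hs]

lemma zeta_eq (t s : ℝ) (hs : 0 ≤ s) :
    zeta t s = ∫ z, erf (t + Real.sqrt s * z) ^ 2 ∂(gaussianReal 0 1) := by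
  rw [zeta, ← gaussian_scale s hs]
  exact integral_map (by fun_prop)
    (((erf_continuous.comp (continuous_const.add continuous_id)).pow 2).aestronglyMeasurable)

lemma zeta_nonneg (t s : ℝ) : 0 ≤ zeta t s :=
  integral_nonneg fun g => sq_nonneg _

lemma zeta_tendsto {t s : ℕ → ℝ} (hs : ∀ n, 0 ≤ s n)
    (ht : Tendsto t atTop atTop) (hs0 : Tendsto s atTop (nhds 0)) :
    Tendsto (fun n => zeta (t n) (s n)) atTop (nhds 1) := by
  have hrw : (fun n => zeta (t n) (s n))
      = fun n => ∫ z, erf (t n + Real.sqrt (s n) * z) ^ 2 ∂(gaussianReal 0 1) :=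
    funext fun n => zeta_eq _ _ (hs n)
  rw [hrw]
  have h1 : (1 : ℝ) = ∫ _z, (1 : ℝ) ∂(gaussianReal 0 1) := by simp
  rw [h1]
  refine tendsto_integral_of_dominated_convergence (fun _ => 4) ?_ (integrable_const 4) ?_ ?_
  · intro n
    exact ((erf_continuous.comp (continuous_const.add (continuous_const.mul
      continuous_id))).pow 2).aestronglyMeasurable
  · intro n
    filter_upwards with z
    have := abs_erf_le_two (t n + Real.sqrt (s n) * z)
    rw [Real.norm_eq_abs, abs_pow]
    calc |erf (t n + Real.sqrt (s n) * z)| ^ 2 ≤ 2 ^ 2 :=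
      pow_le_pow_left₀ (abs_nonneg _) this 2
    _ = 4 := by norm_num
  · filter_upwards with z
    have hsq : Tendsto (fun n => Real.sqrt (s n) * z) atTop (nhds 0) := by
      have h := (Real.continuous_sqrt.tendsto 0).comp hs0
      simpa using h.mul_const z
    have harg : Tendsto (fun n => t n + Real.sqrt (s n) * z) atTop atTop := ht.atTop_add hsq
    have := (erf_tendsto_one.comp harg).pow 2
    simpa using this

lemma sq_integrable_gaussian : Integrable (fun z : ℝ => z ^ 2) (gaussianReal 0 1) := by
  rw [gaussianReal_of_var_ne_zero 0 one_ne_zero]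
  rw [integrable_withDensity_iff (measurable_gaussianPDF 0 1)
    (ae_of_all _ fun x => ENNReal.ofReal_lt_top)]
  have hbase : Integrable (fun x : ℝ => x ^ 2 * Real.exp (-(1/2) * x ^ 2)) := by
    have := integrable_rpow_mul_exp_neg_mul_sq (b := 1/2) (by norm_num) (s := 2) (by norm_num)
    simpa [Real.rpow_natCast] using this
  have h2 := hbase.const_mul ((Real.sqrt (2 * Real.pi * 1))⁻¹)
  have heq : (fun x : ℝ => x ^ 2 * (gaussianPDF 0 1 x).toReal)
      = fun x : ℝ => (Real.sqrt (2 * Real.pi * 1))⁻¹ * (x ^ 2 * Real.exp (-(1/2) * x ^ 2)) := by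
    funext x
    rw [gaussianPDF, ENNReal.toReal_ofReal (gaussianPDFReal_nonneg 0 1 x), gaussianPDFReal]
    norm_num
    rw [show -(x ^ 2) / 2 = -(1/2) * x ^ 2 by ring]
    ring
  rw [heq]
  exact h2

lemma zeta_zero_le (s : ℝ) (hs : 0 ≤ s) :
    zeta 0 s ≤ 4 / Real.pi * (∫ z, z ^ 2 ∂(gaussianReal 0 1)) * s := by
  rw [zeta_eq 0 s hs]
  have hle : ∀ z : ℝ, erf (0 + Real.sqrt s * z) ^ 2 ≤ 4 / Real.pi * s * z ^ 2 := by
    intro z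
    have h := abs_erf_le_linear (0 + Real.sqrt s * z)
    calc erf (0 + Real.sqrt s * z) ^ 2 = |erf (0 + Real.sqrt s * z)| ^ 2 := (sq_abs _).symm
      _ ≤ (2 / Real.sqrt Real.pi * |0 + Real.sqrt s * z|) ^ 2 :=
        pow_le_pow_left₀ (abs_nonneg _) h 2
      _ = 4 / Real.pi * s * z ^ 2 := by
        rw [mul_pow, div_pow, sq_abs, Real.sq_sqrt Real.pi_pos.le, zero_add, mul_pow,
          Real.sq_sqrt hs]
        norm_num [mul_assoc]
  have hint1 : Integrable (fun z : ℝ => erf (0 + Real.sqrt s * z) ^ 2) (gaussianReal 0 1) := by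
    refine Integrable.mono' (integrable_const 4)
      (((erf_continuous.comp (continuous_const.add (continuous_const.mul
        continuous_id))).pow 2).aestronglyMeasurable) (ae_of_all _ fun z => ?_)
    rw [Real.norm_eq_abs, abs_pow]
    calc |erf (0 + Real.sqrt s * z)| ^ 2 ≤ 2 ^ 2 :=
      pow_le_pow_left₀ (abs_nonneg _) (abs_erf_le_two _) 2
    _ = 4 := by norm_num
  have hint2 : Integrable (fun z : ℝ => 4 / Real.pi * s * z ^ 2) (gaussianReal 0 1) :=
    sq_integrable_gaussian.const_mul _
  calc ∫ z, erf (0 + Real.sqrt s * z) ^ 2 ∂(gaussianReal 0 1)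
      ≤ ∫ z, 4 / Real.pi * s * z ^ 2 ∂(gaussianReal 0 1) :=
        integral_mono hint1 hint2 hle
    _ = 4 / Real.pi * (∫ z, z ^ 2 ∂(gaussianReal 0 1)) * s := by
        rw [MeasureTheory.integral_const_mul]; ring

/-- Asymptotic Bayes optimality of the oracle attention predictor: its risk tends to the
noise level `ε²` in the joint scaling `d_n → ∞`, `L_n/d_n → 0`, `λ_n √d_n → ∞`,
`λ_n √L_n → 0`. -/
theorem stmt2 (γ ε : ℝ) (hγ : 0 < γ) (hε : 0 ≤ ε)
    (d L : ℕ → ℕ) (lam : ℕ → ℝ)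
    (hd : ∀ n, 0 < d n) (hL : ∀ n, 0 < L n) (hlam : ∀ n, 0 < lam n)
    (hdlim : Tendsto (fun n => (d n : ℝ)) atTop atTop)
    (hLd : Tendsto (fun n => (L n : ℝ) / (d n : ℝ)) atTop (nhds 0))
    (hlamd : Tendsto (fun n => lam n * Real.sqrt (d n)) atTop atTop)
    (hlamL : Tendsto (fun n => lam n * Real.sqrt (L n)) atTop (nhds 0)) :
    Tendsto (fun n =>
        γ ^ 2
        - 2 * γ ^ 2 * erf (lam n * Real.sqrt ((d n : ℝ) / (2 * (1 + 2 * (lam n) ^ 2 * γ ^ 2))))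
        + γ ^ 2 * zeta (lam n * Real.sqrt ((d n : ℝ) / 2)) ((lam n) ^ 2 * γ ^ 2)
        + ((L n : ℝ) - 1) * zeta 0 ((lam n) ^ 2) + ε ^ 2)
      atTop (nhds (ε ^ 2)) := by
  -- lam tends to 0
  have hlam0 : Tendsto lam atTop (nhds 0) := by
    refine squeeze_zero (fun n => (hlam n).le) (fun n => ?_) hlamL
    have h1 : (1:ℝ) ≤ Real.sqrt (L n) := by
      rw [show (1:ℝ) = Real.sqrt 1 by simp]
      exact Real.sqrt_le_sqrt (by exact_mod_cast (hL n))
    exact le_mul_of_one_le_right (hlam n).le h1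
  have hlamsq : Tendsto (fun n => lam n ^ 2 * γ ^ 2) atTop (nhds 0) := by
    have := ((hlam0.mul hlam0).mul_const (γ ^ 2))
    simpa [sq] using this
  -- first erf term tends to 1
  have hA : Tendsto (fun n => erf (lam n * Real.sqrt ((d n : ℝ) /
      (2 * (1 + 2 * (lam n) ^ 2 * γ ^ 2))))) atTop (nhds 1) := by
    refine erf_tendsto_one.comp ?_
    have hbig : Tendsto (fun n => lam n * Real.sqrt (d n) / 2) atTop atTop :=
      hlamd.atTop_div_const two_pos
    refine tendsto_atTop_mono' atTop ?_ hbig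
    have hev : ∀ᶠ n in atTop, 2 * (lam n ^ 2 * γ ^ 2) ≤ 1 := by
      have := (hlamsq.const_mul 2)
      rw [mul_zero] at this
      exact this.eventually_le_const one_pos
    filter_upwards [hev] with n hn
    have hc : 0 < 1 + 2 * lam n ^ 2 * γ ^ 2 := by positivity
    have h24 : 2 * (1 + 2 * lam n ^ 2 * γ ^ 2) ≤ 4 := by nlinarith
    have hsqrt : Real.sqrt ((d n : ℝ) / 4) ≤
        Real.sqrt ((d n : ℝ) / (2 * (1 + 2 * lam n ^ 2 * γ ^ 2))) := by
      apply Real.sqrt_le_sqrt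
      exact div_le_div_of_nonneg_left (by positivity) (by positivity) h24
    have h4 : Real.sqrt ((d n : ℝ) / 4) = Real.sqrt (d n) / 2 := by
      rw [Real.sqrt_div (Nat.cast_nonneg _) 4,
        show Real.sqrt 4 = 2 by
          rw [show (4:ℝ) = 2 ^ 2 by norm_num, Real.sqrt_sq (by norm_num : (0:ℝ) ≤ 2)]]
    calc lam n * Real.sqrt (d n) / 2 = lam n * (Real.sqrt (d n) / 2) := by ring
      _ = lam n * Real.sqrt ((d n : ℝ) / 4) := by rw [h4]
      _ ≤ lam n * Real.sqrt ((d n : ℝ) / (2 * (1 + 2 * lam n ^ 2 * γ ^ 2))) :=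
          mul_le_mul_of_nonneg_left hsqrt (hlam n).le
  -- second term tends to 1
  have hB : Tendsto (fun n => zeta (lam n * Real.sqrt ((d n : ℝ) / 2)) ((lam n) ^ 2 * γ ^ 2))
      atTop (nhds 1) := by
    refine zeta_tendsto (fun n => by positivity) ?_ hlamsq
    have h2 : ∀ n, lam n * Real.sqrt ((d n : ℝ) / 2)
        = lam n * Real.sqrt (d n) * (Real.sqrt 2)⁻¹ := by
      intro n
      rw [Real.sqrt_div (Nat.cast_nonneg _) 2]
      ring
    simp only [h2]
    exact hlamd.atTop_mul_const (by positivity)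
  -- third term tends to 0
  have hC : Tendsto (fun n => ((L n : ℝ) - 1) * zeta 0 ((lam n) ^ 2)) atTop (nhds 0) := by
    set M : ℝ := ∫ z, z ^ 2 ∂(gaussianReal 0 1) with hM
    have hMnn : 0 ≤ M := integral_nonneg fun z => sq_nonneg _
    have hbound : Tendsto (fun n => 4 / Real.pi * M * (lam n * Real.sqrt (L n)) ^ 2)
        atTop (nhds 0) := by
      have := (hlamL.pow 2).const_mul (4 / Real.pi * M)
      simpa using this
    refine squeeze_zero (fun n => mul_nonneg ?_ (zeta_nonneg _ _)) (fun n => ?_) hbound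
    · have : (1:ℝ) ≤ (L n : ℝ) := by exact_mod_cast hL n
      linarith
    · have h1 : ((L n : ℝ) - 1) ≤ (L n : ℝ) := by linarith
      have h2 : zeta 0 (lam n ^ 2) ≤ 4 / Real.pi * M * lam n ^ 2 :=
        zeta_zero_le _ (sq_nonneg _)
      have h3 : ((L n : ℝ) - 1) * zeta 0 (lam n ^ 2) ≤ (L n : ℝ) * (4 / Real.pi * M * lam n ^ 2) :=
        mul_le_mul h1 h2 (zeta_nonneg _ _) (Nat.cast_nonneg _)
      refine h3.trans_eq ?_
      rw [mul_pow, Real.sq_sqrt (Nat.cast_nonneg (L n))]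
      ring
  have hfinal : Tendsto (fun n =>
      γ ^ 2
      - 2 * γ ^ 2 * erf (lam n * Real.sqrt ((d n : ℝ) / (2 * (1 + 2 * (lam n) ^ 2 * γ ^ 2))))
      + γ ^ 2 * zeta (lam n * Real.sqrt ((d n : ℝ) / 2)) ((lam n) ^ 2 * γ ^ 2)
      + ((L n : ℝ) - 1) * zeta 0 ((lam n) ^ 2) + ε ^ 2) atTop
      (nhds (γ ^ 2 - 2 * γ ^ 2 * 1 + γ ^ 2 * 1 + 0 + ε ^ 2)) :=
    (((tendsto_const_nhds.sub (hA.const_mul _)).add (hB.const_mul _)).add hC).add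
      tendsto_const_nhds
  have heq : γ ^ 2 - 2 * γ ^ 2 * 1 + γ ^ 2 * 1 + 0 + ε ^ 2 = ε ^ 2 := by ring
  rwa [heq] at hfinal
end

section
/- Assume d ≥ 1, L ≥ 1, γ > 0, λ > 0. The points (1, 1) and (−1, −1) are global minimizers of R on the square [−1, 1]²: for every (κ, ν) ∈ [−1, 1]², R(1, 1) = R(−1, −1) ≤ R(κ, ν), with strict inequality unless (κ, ν) ∈ {(1, 1), (−1, −1)}. -/
open MeasureTheory ProbabilityTheory Real Filter

/-- basic derivative of erf -/
lemma erf_hasDerivAt (u : ℝ) : HasDerivAt erf (2 / Real.sqrt π * Real.exp (-u ^ 2)) u := by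
  have hc : Continuous fun r : ℝ => Real.exp (-r ^ 2) := by continuity
  have h := intervalIntegral.integral_hasDerivAt_right
    (hc.intervalIntegrable 0 u) (hc.stronglyMeasurableAtFilter _ _) hc.continuousAt
  exact h.const_mul (2 / Real.sqrt π)

lemma erf_differentiable : Differentiable ℝ erf := fun u => (erf_hasDerivAt u).differentiableAt

lemma erf_strictMono : StrictMono erf :=
  strictMono_of_deriv_pos fun x => by
    rw [(erf_hasDerivAt x).deriv]
    have : 0 < Real.sqrt π := Real.sqrt_pos.mpr Real.pi_pos
    positivity

lemma erf_zero : erf 0 = 0 := by simp [erf]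

lemma erf_neg (u : ℝ) : erf (-u) = -erf u := by
  have h : ∫ r in (0:ℝ)..(-u), Real.exp (-r ^ 2) = -∫ r in (0:ℝ)..u, Real.exp (-r ^ 2) := by
    have h2 := intervalIntegral.integral_comp_neg (a := (0:ℝ)) (b := u)
      (fun r => Real.exp (-r ^ 2))
    simp only [neg_sq, neg_zero] at h2
    rw [h2, intervalIntegral.integral_symm]
  rw [erf, erf, h]
  ring

lemma erf_lt_one (u : ℝ) : erf u < 1 := by
  have hπ : 0 < Real.sqrt π := Real.sqrt_pos.mpr Real.pi_pos
  have hIoi : ∫ r in Set.Ioi (0:ℝ), Real.exp (-r ^ 2) = Real.sqrt π / 2 := by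
    have := integral_gaussian_Ioi 1
    simpa using this
  have hint : Integrable (fun r : ℝ => Real.exp (-r ^ 2)) := by
    have := integrable_exp_neg_mul_sq (b := (1:ℝ)) one_pos
    simpa using this
  have key : ∫ r in (0:ℝ)..u, Real.exp (-r ^ 2) < Real.sqrt π / 2 := by
    rcases le_or_gt u 0 with hu | hu
    · have h1 : ∫ r in (0:ℝ)..u, Real.exp (-r ^ 2) ≤ 0 := by
        rw [intervalIntegral.integral_symm]
        simp only [neg_nonpos]
        exact intervalIntegral.integral_nonneg hu (fun x _ => (Real.exp_pos _).le)
      linarith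
    · rw [intervalIntegral.integral_of_le hu.le]
      have hsplit : Set.Ioc 0 u ∪ Set.Ioi u = Set.Ioi (0:ℝ) := Set.Ioc_union_Ioi_eq_Ioi hu.le
      have hdisj : Disjoint (Set.Ioc (0:ℝ) u) (Set.Ioi u) := by
        rw [Set.disjoint_left]
        rintro x ⟨_, hx2⟩ hx3
        exact absurd hx3 (not_lt.mpr hx2)
      have hu1 : IntegrableOn (fun r : ℝ => Real.exp (-r ^ 2)) (Set.Ioc 0 u) := hint.integrableOn
      have hu2 : IntegrableOn (fun r : ℝ => Real.exp (-r ^ 2)) (Set.Ioi u) := hint.integrableOn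
      have hadd := setIntegral_union hdisj measurableSet_Ioi hu1 hu2
      rw [hsplit] at hadd
      have hpos : 0 < ∫ r in Set.Ioi u, Real.exp (-r ^ 2) := by
        rw [setIntegral_pos_iff_support_of_nonneg_ae
          (ae_of_all _ fun x => (Real.exp_pos _).le) hu2]
        have : Function.support (fun r : ℝ => Real.exp (-r ^ 2)) = Set.univ :=
          Set.eq_univ_of_forall fun x => (Real.exp_pos _).ne'
        rw [this, Set.univ_inter]
        simp
      linarith [hIoi ▸ hadd]
  rw [erf]
  calc 2 / Real.sqrt π * ∫ r in (0:ℝ)..u, Real.exp (-r ^ 2)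
      < 2 / Real.sqrt π * (Real.sqrt π / 2) := by
        apply mul_lt_mul_of_pos_left key (by positivity)
    _ = 1 := by field_simp

lemma neg_one_lt_erf (u : ℝ) : -1 < erf u := by
  have := erf_lt_one (-u)
  rw [erf_neg] at this
  linarith

lemma erf_abs_le (u : ℝ) : |erf u| ≤ 1 :=
  abs_le.mpr ⟨(neg_one_lt_erf u).le, (erf_lt_one u).le⟩

lemma erf_nonneg {u : ℝ} (h : 0 ≤ u) : 0 ≤ erf u := by
  have := erf_strictMono.monotone h
  rwa [erf_zero] at this

lemma erf_pos {u : ℝ} (h : 0 < u) : 0 < erf u := by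
  have := erf_strictMono h
  rwa [erf_zero] at this

/-- integral wrt gaussianReal as a density integral -/
lemma integral_gaussianReal_pdf (v : NNReal) (hv : v ≠ 0) (f : ℝ → ℝ) :
    ∫ x, f x ∂(gaussianReal 0 v) = ∫ x, gaussianPDFReal 0 v x * f x := by
  rw [gaussianReal_of_var_ne_zero 0 hv, gaussianPDF_def]
  have h : (fun x => ENNReal.ofReal (gaussianPDFReal 0 v x))
      = fun x => ((gaussianPDFReal 0 v x).toNNReal : ENNReal) := rfl
  rw [h, integral_withDensity_eq_integral_smul
    ((measurable_gaussianPDFReal 0 v).real_toNNReal) f]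
  congr 1; ext x
  rw [NNReal.smul_def, smul_eq_mul, Real.coe_toNNReal _ (gaussianPDFReal_nonneg 0 v x)]

lemma gaussianReal_map_neg (v : NNReal) :
    (gaussianReal 0 v).map (fun x => -x) = gaussianReal 0 v := by
  have h := gaussianReal_map_const_mul (μ := 0) (v := v) (-1 : ℝ)
  have h2 : (.mk ((-1:ℝ)^2) (by positivity) : NNReal) = 1 := by ext; norm_num
  rw [h2, one_mul, mul_zero] at h
  rw [← h]
  congr 1
  ext x
  ring

lemma integral_comp_neg_gaussian (v : NNReal) (f : ℝ → ℝ) (hf : Continuous f) :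
    ∫ x, f (-x) ∂(gaussianReal 0 v) = ∫ x, f x ∂(gaussianReal 0 v) := by
  conv_rhs => rw [← gaussianReal_map_neg v]
  rw [integral_map (by fun_prop) hf.aestronglyMeasurable]

lemma integrable_of_bdd_cont {μ : Measure ℝ} [IsFiniteMeasure μ] {f : ℝ → ℝ} {C : ℝ}
    (hf : Continuous f) (h : ∀ x, |f x| ≤ C) : Integrable f μ :=
  (integrable_const C).mono' hf.aestronglyMeasurable
    (ae_of_all _ fun x => by simpa [Real.norm_eq_abs] using h x)

lemma integral_pos_of_pos {μ : Measure ℝ} [IsProbabilityMeasure μ] {f : ℝ → ℝ}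
    (hf : Integrable f μ) (h : ∀ x, 0 < f x) : 0 < ∫ x, f x ∂μ := by
  rw [integral_pos_iff_support_of_nonneg_ae (ae_of_all _ fun x => (h x).le) hf]
  have hsupp : Function.support f = Set.univ := Set.eq_univ_of_forall fun x => (h x).ne'
  simp [hsupp]

/-- the gaussian convolution integral -/
lemma integral_exp_sq_gaussianPDF (s : ℝ) (hs : 0 < s) (t : ℝ) :
    ∫ x : ℝ, gaussianPDFReal 0 s.toNNReal x * Real.exp (-(t + x) ^ 2)
      = (Real.sqrt (1 + 2 * s))⁻¹ * Real.exp (-t ^ 2 / (1 + 2 * s)) := by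
  have hs' : ((s.toNNReal : ℝ)) = s := Real.coe_toNNReal s hs.le
  have h1 : (0:ℝ) < 1 + 2 * s := by linarith
  have hB : (0:ℝ) < (1 + 2 * s) / (2 * s) := by positivity
  set B := (1 + 2 * s) / (2 * s) with hBdef
  have key : ∀ x : ℝ, gaussianPDFReal 0 s.toNNReal x * Real.exp (-(t + x) ^ 2)
      = ((Real.sqrt (2 * π * s))⁻¹ * Real.exp (-t ^ 2 / (1 + 2 * s)))
        * Real.exp (-B * (x + t / B) ^ 2) := by
    intro x
    rw [gaussianPDFReal_def]
    simp only [hs', sub_zero]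
    rw [show (2:ℝ) * π * s = 2 * (π * s) from by ring]
    rw [mul_assoc _ (Real.exp _) (Real.exp _), ← Real.exp_add,
        mul_assoc _ (Real.exp _) (Real.exp _), ← Real.exp_add]
    congr 1
    rw [Real.exp_eq_exp, hBdef]
    field_simp
    ring
  calc ∫ x : ℝ, gaussianPDFReal 0 s.toNNReal x * Real.exp (-(t + x) ^ 2)
      = ∫ x : ℝ, ((Real.sqrt (2 * π * s))⁻¹ * Real.exp (-t ^ 2 / (1 + 2 * s)))
          * Real.exp (-B * (x + t / B) ^ 2) := by simp only [key]
    _ = ((Real.sqrt (2 * π * s))⁻¹ * Real.exp (-t ^ 2 / (1 + 2 * s)))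
          * ∫ x : ℝ, Real.exp (-B * (x + t / B) ^ 2) := integral_const_mul _ _
    _ = ((Real.sqrt (2 * π * s))⁻¹ * Real.exp (-t ^ 2 / (1 + 2 * s)))
          * ∫ x : ℝ, Real.exp (-B * x ^ 2) :=
        by rw [integral_add_right_eq_self (fun x => Real.exp (-B * x ^ 2)) (t / B)]
    _ = ((Real.sqrt (2 * π * s))⁻¹ * Real.exp (-t ^ 2 / (1 + 2 * s)))
          * Real.sqrt (π / B) := by rw [integral_gaussian]
    _ = (Real.sqrt (1 + 2 * s))⁻¹ * Real.exp (-t ^ 2 / (1 + 2 * s)) := by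
        have hπB : π / B = (2 * π * s) / (1 + 2 * s) := by
          rw [hBdef]; field_simp
        have hsq : Real.sqrt (π / B) = Real.sqrt (2 * π * s) / Real.sqrt (1 + 2 * s) := by
          rw [hπB, Real.sqrt_div (by positivity)]
        have hne : Real.sqrt (2 * π * s) ≠ 0 := by positivity
        rw [hsq]
        field_simp

lemma toNNReal_ne_zero_of_pos {s : ℝ} (hs : 0 < s) : s.toNNReal ≠ 0 := by
  simp only [ne_eq, Real.toNNReal_eq_zero, not_le]
  exact hs

lemma integrable_erf_shift {v : NNReal} (t : ℝ) :
    Integrable (fun g => erf (t + g)) (gaussianReal 0 v) :=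
  integrable_of_bdd_cont (C := 1)
    (erf_continuous.comp (continuous_const.add continuous_id))
    (fun x => erf_abs_le _)

lemma integrable_erf_sq_shift {v : NNReal} (t : ℝ) :
    Integrable (fun g => erf (t + g) ^ 2) (gaussianReal 0 v) :=
  integrable_of_bdd_cont (C := 1)
    ((erf_continuous.comp (continuous_const.add continuous_id)).pow 2)
    (fun x => by
      rw [abs_pow, pow_two]
      calc |erf (t + x)| * |erf (t + x)| ≤ 1 * 1 :=
        mul_le_mul (erf_abs_le _) (erf_abs_le _) (abs_nonneg _) zero_le_one
      _ = 1 := one_mul 1)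

lemma integral_erf_gaussian (s : ℝ) (hs : 0 < s) (t : ℝ) :
    ∫ g, erf (t + g) ∂(gaussianReal 0 s.toNNReal) = erf (t / Real.sqrt (1 + 2 * s)) := by
  have h1 : (0:ℝ) < 1 + 2 * s := by linarith
  set μ := gaussianReal 0 s.toNNReal with hμ
  set F : ℝ → ℝ := fun t => ∫ g, erf (t + g) ∂μ with hF
  set Gf : ℝ → ℝ := fun t => erf (t / Real.sqrt (1 + 2 * s)) with hG
  have hderivF : ∀ t₀ : ℝ, HasDerivAt F
      (2 / Real.sqrt π * ((Real.sqrt (1 + 2 * s))⁻¹ * Real.exp (-t₀ ^ 2 / (1 + 2 * s)))) t₀ := by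
    intro t₀
    have main := hasDerivAt_integral_of_dominated_loc_of_deriv_le
      (μ := μ) (F := fun t g => erf (t + g))
      (F' := fun t g => 2 / Real.sqrt π * Real.exp (-(t + g) ^ 2)) (x₀ := t₀)
      (bound := fun _ => 2 / Real.sqrt π) (Metric.ball_mem_nhds t₀ one_pos)
      (Eventually.of_forall fun x =>
        (erf_continuous.comp (continuous_const.add continuous_id)).aestronglyMeasurable)
      (integrable_erf_shift t₀)
      ((Continuous.aestronglyMeasurable (by continuity)))
      (ae_of_all _ fun g x _ => by
        rw [Real.norm_eq_abs, abs_of_nonneg (by positivity)]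
        have hle : Real.exp (-(x + g) ^ 2) ≤ 1 := by
          rw [← Real.exp_zero]
          exact Real.exp_le_exp.mpr (neg_nonpos.mpr (sq_nonneg _))
        have hπ : 0 < Real.sqrt π := Real.sqrt_pos.mpr Real.pi_pos
        calc 2 / Real.sqrt π * Real.exp (-(x + g) ^ 2) ≤ 2 / Real.sqrt π * 1 :=
          mul_le_mul_of_nonneg_left hle (by positivity)
        _ = 2 / Real.sqrt π := mul_one _)
      (integrable_const _)
      (ae_of_all _ fun g x _ => by
        have h := (erf_hasDerivAt (x + g)).comp x ((hasDerivAt_id x).add_const g)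
        rw [mul_one] at h
        exact h)
    have heq : (∫ g, 2 / Real.sqrt π * Real.exp (-(t₀ + g) ^ 2) ∂μ)
        = 2 / Real.sqrt π * ((Real.sqrt (1 + 2 * s))⁻¹ * Real.exp (-t₀ ^ 2 / (1 + 2 * s))) := by
      rw [integral_const_mul]
      congr 1
      rw [hμ, integral_gaussianReal_pdf _ (toNNReal_ne_zero_of_pos hs)
        (fun x => Real.exp (-(t₀ + x) ^ 2))]
      exact integral_exp_sq_gaussianPDF s hs t₀
    exact heq ▸ main.2
  have hderivG : ∀ t₀ : ℝ, HasDerivAt Gf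
      (2 / Real.sqrt π * ((Real.sqrt (1 + 2 * s))⁻¹ * Real.exp (-t₀ ^ 2 / (1 + 2 * s)))) t₀ := by
    intro t₀
    have h := (erf_hasDerivAt (t₀ / Real.sqrt (1 + 2 * s))).comp t₀
      ((hasDerivAt_id t₀).div_const (Real.sqrt (1 + 2 * s)))
    have harg : (t₀ / Real.sqrt (1 + 2 * s)) ^ 2 = t₀ ^ 2 / (1 + 2 * s) := by
      rw [div_pow, Real.sq_sqrt h1.le]
    exact h.congr_deriv (by rw [harg]; ring)
  have hconst : ∀ x : ℝ, F x - Gf x = F 0 - Gf 0 := by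
    intro x
    have hd : ∀ y : ℝ, HasDerivAt (fun y => F y - Gf y) 0 y := fun y => by
      have h := (hderivF y).sub (hderivG y)
      rw [sub_self] at h
      exact h
    exact is_const_of_deriv_eq_zero (fun y => (hd y).differentiableAt)
      (fun y => (hd y).deriv) x 0
  have hF0 : F 0 = 0 := by
    have heq : F 0 = ∫ g, erf g ∂μ := by simp [hF]
    have h2 : ∫ g, erf (-g) ∂μ = ∫ g, erf g ∂μ :=
      integral_comp_neg_gaussian _ erf erf_continuous
    have h3 : ∫ g, erf (-g) ∂μ = -∫ g, erf g ∂μ := by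
      simp only [erf_neg]
      exact integral_neg _
    rw [heq]
    linarith [h2.symm.trans h3]
  have hG0 : Gf 0 = 0 := by simp [hG, erf_zero]
  have := hconst t
  rw [hF0, hG0] at this
  have : F t = Gf t := by linarith
  exact this

lemma key_ineq (s : ℝ) (hs : 0 < s) {t1 t2 : ℝ} (h : t1 < t2) :
    zeta t2 s - zeta t1 s
      < 2 * (erf (t2 / Real.sqrt (1 + 2 * s)) - erf (t1 / Real.sqrt (1 + 2 * s))) := by
  set μ := gaussianReal 0 s.toNNReal with hμ
  have hE2 := integral_erf_gaussian s hs t2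
  have hE1 := integral_erf_gaussian s hs t1
  rw [← hE1, ← hE2]
  have hint1 : Integrable (fun g => erf (t1 + g)) μ := integrable_erf_shift t1
  have hint2 : Integrable (fun g => erf (t2 + g)) μ := integrable_erf_shift t2
  have hsq1 : Integrable (fun g => erf (t1 + g) ^ 2) μ := integrable_erf_sq_shift t1
  have hsq2 : Integrable (fun g => erf (t2 + g) ^ 2) μ := integrable_erf_sq_shift t2
  have hpos : 0 < ∫ g, (2 * (erf (t2 + g) - erf (t1 + g))
      - (erf (t2 + g) ^ 2 - erf (t1 + g) ^ 2)) ∂μ := by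
    apply integral_pos_of_pos
    · exact (((hint2.sub hint1).const_mul 2).sub (hsq2.sub hsq1))

    · intro g
      have ha : erf (t1 + g) < erf (t2 + g) := erf_strictMono (by linarith)
      have hb : erf (t2 + g) < 1 := erf_lt_one _
      have hc : -1 < erf (t1 + g) := neg_one_lt_erf _
      nlinarith [mul_pos (sub_pos.mpr ha)
        (show (0:ℝ) < 2 - erf (t2 + g) - erf (t1 + g) by linarith)]
  have hA : Integrable (fun g => 2 * (erf (t2 + g) - erf (t1 + g))) μ := by
    exact (hint2.sub hint1).const_mul 2
  have hB : Integrable (fun g => erf (t2 + g) ^ 2 - erf (t1 + g) ^ 2) μ := by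
    exact hsq2.sub hsq1
  rw [integral_sub hA hB, integral_const_mul, integral_sub hint2 hint1,
    integral_sub hsq2 hsq1] at hpos
  have hz2 : zeta t2 s = ∫ g, erf (t2 + g) ^ 2 ∂μ := rfl
  have hz1 : zeta t1 s = ∫ g, erf (t1 + g) ^ 2 ∂μ := rfl
  rw [hz1, hz2]
  linarith

lemma zeta_even (t s : ℝ) : zeta (-t) s = zeta t s := by
  unfold zeta
  have hcont : Continuous fun g : ℝ => erf (-t + g) ^ 2 :=
    (erf_continuous.comp (continuous_const.add continuous_id)).pow 2
  rw [← integral_comp_neg_gaussian _ _ hcont]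
  congr 1
  ext g
  rw [show -t + -g = -(t + g) from by ring, erf_neg]
  ring

/-- The reduced risk `R(κ, ν)` on the invariant manifold. -/
noncomputable def Rred (d L : ℕ) (γ lam ε : ℝ) (κ ν : ℝ) : ℝ :=
  γ ^ 2 - 2 * γ ^ 2 * ν * erf (lam * Real.sqrt ((d : ℝ) / 2) * κ /
      Real.sqrt (1 + 2 * lam ^ 2 * γ ^ 2))
    + γ ^ 2 * zeta (lam * Real.sqrt ((d : ℝ) / 2) * κ) (lam ^ 2 * γ ^ 2)
    + ((L : ℝ) - 1) * zeta 0 (lam ^ 2) + ε ^ 2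

/-- Partial derivative `∂κR` of the reduced risk with respect to its first argument. -/
noncomputable def dkR (d L : ℕ) (γ lam ε : ℝ) (κ ν : ℝ) : ℝ :=
  deriv (fun x => Rred d L γ lam ε x ν) κ

/-- Partial derivative `∂νR` of the reduced risk with respect to its second argument. -/
noncomputable def dvR (d L : ℕ) (γ lam ε : ℝ) (κ ν : ℝ) : ℝ :=
  deriv (fun y => Rred d L γ lam ε κ y) ν

/-- The PGD map `g_α`. -/
noncomputable def pgd (d L : ℕ) (γ lam ε α : ℝ) (p : ℝ × ℝ) : ℝ × ℝ :=
  ((p.1 - α * dkR d L γ lam ε p.1 p.2 * (1 - p.1 ^ 2)) /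
      Real.sqrt (1 + α ^ 2 * (dkR d L γ lam ε p.1 p.2) ^ 2 * (1 - p.1 ^ 2)),
   (p.2 - α * dvR d L γ lam ε p.1 p.2 * (1 - p.2 ^ 2)) /
      Real.sqrt (1 + α ^ 2 * (dvR d L γ lam ε p.1 p.2) ^ 2 * (1 - p.2 ^ 2)))

/-- The square `[−1, 1]²`. -/
def sqIcc : Set (ℝ × ℝ) := {p | p.1 ∈ Set.Icc (-1 : ℝ) 1 ∧ p.2 ∈ Set.Icc (-1 : ℝ) 1}

lemma Rred_neg_neg (d L : ℕ) (γ lam ε κ ν : ℝ) :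
    Rred d L γ lam ε (-κ) (-ν) = Rred d L γ lam ε κ ν := by
  unfold Rred
  rw [show lam * Real.sqrt ((d : ℝ) / 2) * -κ / Real.sqrt (1 + 2 * lam ^ 2 * γ ^ 2)
      = -(lam * Real.sqrt ((d : ℝ) / 2) * κ / Real.sqrt (1 + 2 * lam ^ 2 * γ ^ 2)) from by ring]
  rw [show lam * Real.sqrt ((d : ℝ) / 2) * -κ = -(lam * Real.sqrt ((d : ℝ) / 2) * κ) from by ring]
  rw [erf_neg, zeta_even]
  ring

/-- `(1,1)` and `(−1,−1)` are the global minimizers of the reduced risk on `[−1,1]²`. -/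
theorem stmt5 (d L : ℕ) (hd : 1 ≤ d) (hL : 1 ≤ L) (γ lam ε : ℝ)
    (hγ : 0 < γ) (hlam : 0 < lam) (hε : 0 ≤ ε) :
    Rred d L γ lam ε 1 1 = Rred d L γ lam ε (-1) (-1) ∧
    ∀ p ∈ sqIcc, Rred d L γ lam ε 1 1 ≤ Rred d L γ lam ε p.1 p.2 ∧
      (p ≠ ((1 : ℝ), (1 : ℝ)) → p ≠ ((-1 : ℝ), (-1 : ℝ)) →
        Rred d L γ lam ε 1 1 < Rred d L γ lam ε p.1 p.2) := by
  set c : ℝ := lam * Real.sqrt ((d : ℝ) / 2) with hc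
  have hd1 : (1:ℝ) ≤ (d:ℝ) := by exact_mod_cast hd
  have hcpos : 0 < c := by
    apply mul_pos hlam
    apply Real.sqrt_pos.mpr
    linarith
  set s : ℝ := lam ^ 2 * γ ^ 2 with hsdef
  have hspos : 0 < s := by positivity
  have hqe : (1 : ℝ) + 2 * lam ^ 2 * γ ^ 2 = 1 + 2 * s := by rw [hsdef]; ring
  have h12s : (0:ℝ) < 1 + 2 * s := by linarith
  have hqpos : 0 < Real.sqrt (1 + 2 * s) := Real.sqrt_pos.mpr h12s
  -- difference formula
  have hdiff : ∀ κ ν : ℝ, Rred d L γ lam ε κ ν - Rred d L γ lam ε 1 1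
      = γ ^ 2 * (2 * (erf (c / Real.sqrt (1 + 2 * s))
          - ν * erf (c * κ / Real.sqrt (1 + 2 * s)))
        + (zeta (c * κ) s - zeta c s)) := by
    intro κ ν
    unfold Rred
    rw [hqe, ← hc, ← hsdef, mul_one]
    ring
  have core : ∀ κ ν : ℝ, 0 ≤ κ → κ ≤ 1 → -1 ≤ ν → ν ≤ 1 →
      0 ≤ Rred d L γ lam ε κ ν - Rred d L γ lam ε 1 1 ∧
      (¬(κ = 1 ∧ ν = 1) → 0 < Rred d L γ lam ε κ ν - Rred d L γ lam ε 1 1) := by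
    intro κ ν h0 h1 hν1 hν2
    rw [hdiff κ ν]
    have herfnn : 0 ≤ erf (c * κ / Real.sqrt (1 + 2 * s)) := erf_nonneg (by positivity)
    have hmono : ν * erf (c * κ / Real.sqrt (1 + 2 * s))
        ≤ erf (c * κ / Real.sqrt (1 + 2 * s)) := by nlinarith
    have hγ2 : 0 < γ ^ 2 := by positivity
    rcases eq_or_lt_of_le h1 with hk1 | hk1
    · subst hk1
      rw [mul_one]
      have hz : zeta (c * 1) s - zeta c s = 0 := by rw [mul_one]; ring
      rw [show c * 1 = c from mul_one c] at *
      have hepos : 0 < erf (c / Real.sqrt (1 + 2 * s)) := erf_pos (by positivity)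
      constructor
      · nlinarith [mul_nonneg hγ2.le (mul_nonneg
          (show (0:ℝ) ≤ 1 - ν by linarith) hepos.le)]
      · intro hne
        have hν : ν < 1 := by
          rcases lt_or_eq_of_le hν2 with h | h
          · exact h
          · exact absurd ⟨rfl, h⟩ hne
        nlinarith [mul_pos hγ2 (mul_pos
          (show (0:ℝ) < 1 - ν by linarith) hepos)]
    · have hkey := key_ineq s hspos (t1 := c * κ) (t2 := c) (by nlinarith)
      have hsum : 0 < 2 * (erf (c / Real.sqrt (1 + 2 * s))
          - ν * erf (c * κ / Real.sqrt (1 + 2 * s))) + (zeta (c * κ) s - zeta c s) := by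
        linarith
      exact ⟨(mul_pos hγ2 hsum).le, fun _ => mul_pos hγ2 hsum⟩
  have hsymm : ∀ κ ν : ℝ, Rred d L γ lam ε κ ν = Rred d L γ lam ε (-κ) (-ν) := by
    intro κ ν
    rw [Rred_neg_neg]
  constructor
  · have := hsymm 1 1
    simpa using this
  · rintro ⟨κ, ν⟩ ⟨⟨hκ1, hκ2⟩, hν1, hν2⟩
    simp only at hκ1 hκ2 hν1 hν2 ⊢
    rcases le_or_gt 0 κ with hk | hk
    · have h := core κ ν hk hκ2 hν1 hν2
      refine ⟨by linarith [h.1], fun hne _ => ?_⟩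
      have hne' : ¬(κ = 1 ∧ ν = 1) := by
        rintro ⟨rfl, rfl⟩
        exact hne rfl
      linarith [h.2 hne']
    · have h := core (-κ) (-ν) (by linarith) (by linarith) (by linarith) (by linarith)
      have hR : Rred d L γ lam ε κ ν = Rred d L γ lam ε (-κ) (-ν) := hsymm κ ν
      refine ⟨by rw [hR]; linarith [h.1], fun _ hne2 => ?_⟩
      have hne' : ¬(-κ = 1 ∧ -ν = 1) := by
        rintro ⟨h1, h2⟩
        apply hne2
        have hκe : κ = -1 := by linarith
        have hνe : ν = -1 := by linarith
        rw [hκe, hνe]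
      rw [hR]
      linarith [h.2 hne']
end
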